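/- The map NU₂ defined by the two rules (a) NU₂([0 1 2^h A (-1)^{h-1}]) = [0 0^{h-1} 1 A 1^h] for h ≥ 2 and lists A with all entries ≤ 2, last entry ≥ 0 (or A empty), and consecutive increases at most 1, and (b) NU₂([0 1 2^k B (-1)^k]) = [0 0^k B 0 1^k] for k ≥ 1 and lists B with all entries ≤ 2, first entry ≤ 1, last entry ≥ -1 (or B empty), and consecutive increases at most 1, satisfies: for any class γ in its domain, defc(NU₂(γ)) = defc(γ) and dinv(NU₂(γ)) = dinv(γ) + 1. -/

import Mathlib

/-- dinv contribution of an entry coming from extended negative positions. -/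
def negContrib (x : ℤ) : ℕ := (if x ≤ -1 then 1 else 0) + (if x ≤ -2 then 1 else 0)

/-- The diagonal inversion statistic of a quasi-Dyck vector, with the
convention `v_k = k - 1` for `k ≤ 0`. -/
def dinv (v : List ℤ) : ℕ :=
  (Finset.univ.filter (fun p : Fin v.length × Fin v.length =>
      (p.1 : ℕ) < (p.2 : ℕ) ∧ (v.get p.1 - v.get p.2 = 0 ∨ v.get p.1 - v.get p.2 = 1))).card
  + (v.map negContrib).sum

def area (v : List ℤ) : ℤ := v.sum

def defc (v : List ℤ) : ℤ := (v.length.choose 2 : ℤ) - area v - (dinv v : ℤ)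

/-- Quasi-Dyck vector: nonempty, starts with 0, consecutive increases ≤ 1. -/
def IsQDV (v : List ℤ) : Prop :=
  v.head? = some 0 ∧ ∀ i : ℕ, i + 1 < v.length → v.getD (i + 1) 0 ≤ v.getD i 0 + 1

def IsDyck (v : List ℤ) : Prop := IsQDV v ∧ ∀ x ∈ v, 0 ≤ x

def stepRel (v w : List ℤ) : Prop := w = 0 :: v.map (· + 1)

def dyckEquiv : List ℤ → List ℤ → Prop := Relation.EqvGen stepRel

def dyckSetoid : Setoid (List ℤ) := Relation.EqvGen.setoid stepRel

abbrev DyckClass := Quotient dyckSetoid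

def cls (v : List ℤ) : DyckClass := Quotient.mk dyckSetoid v

/-- Reduced Dyck vector: a Dyck vector that is not `0 z⁺` for a Dyck vector `z`. -/
def IsReducedDV (v : List ℤ) : Prop :=
  IsDyck v ∧ ¬ ∃ z : List ℤ, IsDyck z ∧ v = 0 :: z.map (· + 1)

/-- The leader of a QDV: the largest `d` such that `v` starts with `0,1,...,d`. -/
def leader (v : List ℤ) : ℕ :=
  Nat.findGreatest (fun d => ∀ i, i ≤ d → v.getD i 0 = (i : ℤ)) (v.length - 1)

/-- Delete the leader symbol and append `leader - 1`. -/
def nuStep (v : List ℤ) : List ℤ :=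
  v.take (leader v) ++ v.drop (leader v + 1) ++ [(leader v : ℤ) - 1]

def nuApplies (v : List ℤ) : Prop :=
  IsQDV v ∧ 2 ≤ v.length ∧ 0 ≤ v.getD 1 0 ∧ (leader v : ℤ) ≤ v.getLastD 0 + 2

/-- The map NU₁ on Dyck classes, as a relation. -/
def nuClassRel (c c' : DyckClass) : Prop :=
  ∃ v, nuApplies v ∧ c = cls v ∧ c' = cls (nuStep v)

def stepOk (A : List ℤ) : Prop := ∀ i : ℕ, i + 1 < A.length → A.getD (i + 1) 0 ≤ A.getD i 0 + 1

def okA (A : List ℤ) : Prop :=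
  A = [] ∨ ((∀ x ∈ A, x ≤ 2) ∧ 0 ≤ A.getLastD 0 ∧ stepOk A)

def okB (B : List ℤ) : Prop :=
  B = [] ∨ ((∀ x ∈ B, x ≤ 2) ∧ B.headD 0 ≤ 1 ∧ -1 ≤ B.getLastD 0 ∧ stepOk B)

/-- The map NU₂ on Dyck classes, as a relation. -/
def nu2ClassRel (c c' : DyckClass) : Prop :=
  (∃ (h : ℕ) (A : List ℤ), 2 ≤ h ∧ okA A ∧
      c = cls ([0, 1] ++ List.replicate h (2:ℤ) ++ A ++ List.replicate (h - 1) (-1)) ∧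
      c' = cls (List.replicate h (0:ℤ) ++ [1] ++ A ++ List.replicate h 1)) ∨
  (∃ (k : ℕ) (B : List ℤ), 1 ≤ k ∧ okB B ∧
      c = cls ([0, 1] ++ List.replicate k (2:ℤ) ++ B ++ List.replicate k (-1)) ∧
      c' = cls (List.replicate (k + 1) (0:ℤ) ++ B ++ [0] ++ List.replicate k 1))

/-- The extended next-up map NU = NU₁ ∪ NU₂, as a relation on Dyck classes. -/
def nuRel (c c' : DyckClass) : Prop := nuClassRel c c' ∨ nu2ClassRel c c'

/-- An integer partition, given by its weakly decreasing list of positive parts. -/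
def IsPartitionList (l : List ℕ) : Prop := l.Pairwise (· ≥ ·) ∧ ∀ x ∈ l, 0 < x

/-- `phi l n` = the QDV `(0 - λ_n, 1 - λ_{n-1}, ..., (n-1) - λ_1)`. -/
def phi (l : List ℕ) (n : ℕ) : List ℤ :=
  List.ofFn (fun i : Fin n => (i : ℤ) - (l.getD (n - 1 - (i : ℕ)) 0 : ℤ))

def nuOne (g : List ℕ) : List ℕ :=
  (g.length + 1) :: (g.map (· - 1)).filter (fun x => 0 < x)

def ndOne (g : List ℕ) : List ℕ :=
  g.tail.map (· + 1) ++ List.replicate (g.headD 0 - g.length) 1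

/-- dinv of a partition: number of cells with arm - leg ∈ {0,1}. -/
def pdinv (l : List ℕ) : ℕ :=
  (Finset.univ.filter (fun c : Fin l.length × Fin (l.headD 0) =>
    (c.2 : ℕ) < l.get c.1 ∧
      (l.get c.1 - 1 - (c.2 : ℕ) =
          (Finset.univ.filter (fun i' : Fin l.length =>
            (c.1 : ℕ) < (i' : ℕ) ∧ (c.2 : ℕ) < l.get i')).card ∨
        l.get c.1 - 1 - (c.2 : ℕ) =
          (Finset.univ.filter (fun i' : Fin l.length =>
            (c.1 : ℕ) < (i' : ℕ) ∧ (c.2 : ℕ) < l.get i')).card + 1))).card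

/-- `bWord [n_1, ..., n_r]` = `0 1^{n_1} 0 1^{n_2} ⋯ 0 1^{n_r}`. -/
def bWord (ns : List ℕ) : List ℤ :=
  (ns.map (fun m => (0:ℤ) :: List.replicate m 1)).flatten

/-- `msize [n_1, ..., n_r] = Σ i·n_i`, the size of the partition `(r^{n_r},...,1^{n_1})`. -/
def msize (ns : List ℕ) : ℕ :=
  (List.zipWith (fun m i => m * i) ns (List.range' 1 ns.length)).sum

/-- The reduced Dyck vector `0 B_μ` of the tail initiator of a partition. -/
def tiVec (l : List ℕ) : List ℤ :=
  (0:ℤ) :: ((List.range' 1 (l.headD 0)).map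
    (fun i => (0:ℤ) :: List.replicate (l.count i) (1:ℤ))).flatten

/-- `c` is the second-order tail initiator of the partition `l`: obtained from
`[0 B_μ]` by iterating the extended next-down map as long as possible. -/
def IsTI2 (l : List ℕ) (c : DyckClass) : Prop :=
  Relation.ReflTransGen (fun x y => nuRel y x) (cls (tiVec l)) c ∧ ∀ d, ¬ nuRel d c

/-- `m` is the minimum triangle height of the Dyck class `c`. -/
def mindIs (c : DyckClass) (m : ℕ) : Prop :=
  ∃ v, IsReducedDV v ∧ c = cls v ∧ v.length = m

/-- Flagpole partition: `|μ| + 8 ≤ 2 mind(TI₂(μ))`. -/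
def IsFlagpole (l : List ℕ) : Prop :=
  ∃ c m, IsTI2 l c ∧ mindIs c m ∧ l.sum + 8 ≤ 2 * m

/-- The Dyck vector `v(λ,a,ε) = 0 0 1 2^{a-ε} B_λ⁺ 1^ε`. -/
def vLam (ns : List ℕ) (a ε : ℕ) : List ℤ :=
  [0, 0, 1] ++ List.replicate (a - ε) (2:ℤ) ++ (bWord ns).map (· + 1) ++ List.replicate ε 1


section Aux

def cnt (x : ℤ) (l : List ℤ) : ℕ := l.countP (fun y => x - y = 0 ∨ x - y = 1)

def pc : List ℤ → ℕ
  | [] => 0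
  | x :: l => cnt x l + pc l

lemma cnt_eq_sum (x : ℤ) (l : List ℤ) :
    cnt x l = ∑ i : Fin l.length, if (x - l.get i = 0 ∨ x - l.get i = 1) then 1 else 0 := by
  induction l with
  | nil => simp [cnt]
  | cons a l ih =>
    simp only [List.length_cons]
    rw [Fin.sum_univ_succ]
    simp only [cnt, List.countP_cons] at *
    rw [ih]
    by_cases hc : (x - a = 0 ∨ x - a = 1) <;> simp [hc] <;> omega

lemma dinv_eq (v : List ℤ) : dinv v = pc v + (v.map negContrib).sum := by
  unfold dinv
  congr 1
  induction v with
  | nil => simp [pc]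
  | cons a l ih =>
    rw [Finset.card_filter, Fintype.sum_prod_type]
    simp only [List.length_cons]
    rw [Fin.sum_univ_succ]
    rw [Finset.card_filter, Fintype.sum_prod_type] at ih
    simp only [pc]
    congr 1
    · rw [Fin.sum_univ_succ]
      simp only [Fin.val_zero, Fin.val_succ, List.get]
      rw [cnt_eq_sum]
      simp
    · rw [← ih]
      congr 1
      funext i
      rw [Fin.sum_univ_succ]
      simp only [Fin.val_succ, Fin.val_zero, List.get]
      simp

def cross (X Y : List ℤ) : ℕ := (X.map (fun x => cnt x Y)).sum

lemma cnt_append (x : ℤ) (Y Z : List ℤ) : cnt x (Y ++ Z) = cnt x Y + cnt x Z := by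
  simp [cnt, List.countP_append]

lemma cnt_nil (x : ℤ) : cnt x [] = 0 := rfl

lemma cnt_cons (x a : ℤ) (l : List ℤ) :
    cnt x (a :: l) = cnt x l + (if (x - a = 0 ∨ x - a = 1) then 1 else 0) := by
  simp only [cnt, List.countP_cons]
  by_cases hc : (x - a = 0 ∨ x - a = 1) <;> simp [hc]

lemma cnt_replicate (x c : ℤ) (n : ℕ) :
    cnt x (List.replicate n c) = if (x - c = 0 ∨ x - c = 1) then n else 0 := by
  induction n with
  | zero => simp [cnt]
  | succ n ih =>
    rw [List.replicate_succ, cnt_cons, ih]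
    by_cases hc : (x - c = 0 ∨ x - c = 1) <;> simp [hc]

lemma pc_append (X Y : List ℤ) : pc (X ++ Y) = pc X + pc Y + cross X Y := by
  induction X with
  | nil => simp [pc, cross]
  | cons a X ih =>
    show cnt a (X ++ Y) + pc (X ++ Y) = _
    rw [cnt_append, ih]
    simp only [cross, List.map_cons, List.sum_cons, pc]
    ring

lemma pc_replicate (c : ℤ) (n : ℕ) : pc (List.replicate n c) = n.choose 2 := by
  induction n with
  | zero => simp [pc]
  | succ n ih =>
    rw [List.replicate_succ]
    simp only [pc, ih, cnt_replicate]
    rw [Nat.choose_succ_succ]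
    simp

lemma cross_append_left (X Y Z : List ℤ) : cross (X ++ Y) Z = cross X Z + cross Y Z := by
  simp [cross]

lemma cross_append_right (X Y Z : List ℤ) : cross X (Y ++ Z) = cross X Y + cross X Z := by
  simp only [cross, cnt_append, ← List.sum_map_add]

lemma cross_cons_left (x : ℤ) (X Y : List ℤ) : cross (x :: X) Y = cnt x Y + cross X Y := by
  simp [cross]

lemma cross_nil_left (Y : List ℤ) : cross [] Y = 0 := rfl

lemma cross_replicate_left (c : ℤ) (n : ℕ) (Y : List ℤ) :
    cross (List.replicate n c) Y = n * cnt c Y := by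
  simp [cross, List.map_replicate, List.sum_replicate, smul_eq_mul]

lemma cross_replicate_right (X : List ℤ) (c : ℤ) (n : ℕ) :
    cross X (List.replicate n c) = n * X.countP (fun a => a - c = 0 ∨ a - c = 1) := by
  induction X with
  | nil => simp [cross]
  | cons a X ih =>
    rw [cross_cons_left, ih, cnt_replicate, List.countP_cons]
    by_cases hc : (a - c = 0 ∨ a - c = 1) <;> simp [hc] <;> ring

lemma cross_singleton_right (X : List ℤ) (c : ℤ) :
    cross X [c] = X.countP (fun a => a - c = 0 ∨ a - c = 1) := by
  have h1 : [c] = List.replicate 1 c := rfl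
  rw [h1, cross_replicate_right, one_mul]

lemma cross_cons_right (X : List ℤ) (c : ℤ) (Y : List ℤ) :
    cross X (c :: Y) = X.countP (fun a => a - c = 0 ∨ a - c = 1) + cross X Y := by
  induction X with
  | nil => rfl
  | cons a X ih =>
    rw [cross_cons_left, ih, cnt_cons, cross_cons_left, List.countP_cons]
    by_cases hc : (a - c = 0 ∨ a - c = 1) <;> simp [hc] <;> ring

lemma countP_replicate (p : ℤ → Bool) (n : ℕ) (c : ℤ) :
    List.countP p (List.replicate n c) = if p c then n else 0 := by
  induction n with
  | zero => simp
  | succ n ih =>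
    rw [List.replicate_succ, List.countP_cons, ih]
    by_cases hc : p c <;> simp [hc]

end Aux

theorem stmt16 :
    (∀ (h : ℕ) (A : List ℤ), 2 ≤ h → okA A →
      defc (List.replicate h (0:ℤ) ++ [1] ++ A ++ List.replicate h 1)
        = defc ([0, 1] ++ List.replicate h (2:ℤ) ++ A ++ List.replicate (h - 1) (-1)) ∧
      dinv (List.replicate h (0:ℤ) ++ [1] ++ A ++ List.replicate h 1)
        = dinv ([0, 1] ++ List.replicate h (2:ℤ) ++ A ++ List.replicate (h - 1) (-1)) + 1) ∧
    (∀ (k : ℕ) (B : List ℤ), 1 ≤ k → okB B →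
      defc (List.replicate (k + 1) (0:ℤ) ++ B ++ [0] ++ List.replicate k 1)
        = defc ([0, 1] ++ List.replicate k (2:ℤ) ++ B ++ List.replicate k (-1)) ∧
      dinv (List.replicate (k + 1) (0:ℤ) ++ B ++ [0] ++ List.replicate k 1)
        = dinv ([0, 1] ++ List.replicate k (2:ℤ) ++ B ++ List.replicate k (-1)) + 1) := by
  constructor
  · intro h A h2 _
    obtain ⟨m, rfl⟩ : ∃ m, h = m + 1 := ⟨h - 1, by omega⟩
    have hd : dinv (List.replicate (m+1) (0:ℤ) ++ [1] ++ A ++ List.replicate (m+1) 1)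
        = dinv ([0, 1] ++ List.replicate (m+1) (2:ℤ) ++ A ++ List.replicate ((m+1) - 1) (-1)) + 1 := by
      simp [dinv_eq, pc_append, pc_replicate, cross_append_left, cross_append_right,
        cross_replicate_left, cross_replicate_right, cross_singleton_right,
        cnt_append, cnt_replicate, cnt_cons, cnt_nil,
        pc, cross_nil_left, cross_cons_left, List.map_append, List.sum_append, List.map_replicate,
        List.sum_replicate, smul_eq_mul, List.map_cons, List.sum_cons, List.map_nil, List.sum_nil,
        negContrib, countP_replicate]
      have e1' : List.countP (fun a => decide (a + 1 = 0) || decide (a = 0)) A = cnt 0 A := by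
        refine List.countP_congr fun a _ => ?_
        simp only [Bool.or_eq_true, decide_eq_true_eq, cnt]
        omega
      have e2' : List.countP (fun a => decide (a - 1 = 0) || decide (a - 1 = 1)) A = cnt 2 A := by
        refine List.countP_congr fun a _ => ?_
        simp only [Bool.or_eq_true, decide_eq_true_eq, cnt]
        omega
      rw [e1', e2']
      simp only [Nat.add_sub_cancel, Nat.choose_succ_succ, Nat.choose_one_right, add_mul, one_mul]
      have : m.choose (Nat.succ 1) = m.choose 2 := rfl
      omega
    refine ⟨?_, hd⟩
    have hl : (List.replicate (m+1) (0:ℤ) ++ [1] ++ A ++ List.replicate (m+1) 1).length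
        = ([0, 1] ++ List.replicate (m+1) (2:ℤ) ++ A ++ List.replicate ((m+1) - 1) (-1)).length := by
      simp; omega
    have ha : area ([0, 1] ++ List.replicate (m+1) (2:ℤ) ++ A ++ List.replicate ((m+1) - 1) (-1))
        = area (List.replicate (m+1) (0:ℤ) ++ [1] ++ A ++ List.replicate (m+1) 1) + 1 := by
      simp [area, List.sum_append, List.sum_replicate, smul_eq_mul]
      push_cast
      ring
    unfold defc
    rw [hl, ha, hd]
    push_cast
    ring
  · intro k B h1 _
    have hd : dinv (List.replicate (k + 1) (0:ℤ) ++ B ++ [0] ++ List.replicate k 1)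
        = dinv ([0, 1] ++ List.replicate k (2:ℤ) ++ B ++ List.replicate k (-1)) + 1 := by
      simp [dinv_eq, pc_append, pc_replicate, cross_append_left, cross_append_right,
        cross_replicate_left, cross_replicate_right, cross_singleton_right,
        cnt_append, cnt_replicate, cnt_cons, cnt_nil,
        pc, cross_nil_left, cross_cons_left, List.map_append, List.sum_append, List.map_replicate,
        List.sum_replicate, smul_eq_mul, List.map_cons, List.sum_cons, List.map_nil, List.sum_nil,
        negContrib, countP_replicate, cross_cons_right]
      have e1' : List.countP (fun a => decide (a + 1 = 0) || decide (a = 0)) B = cnt 0 B := by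
        refine List.countP_congr fun a _ => ?_
        simp only [Bool.or_eq_true, decide_eq_true_eq, cnt]
        omega
      have e2' : List.countP (fun a => decide (a - 1 = 0) || decide (a - 1 = 1)) B = cnt 2 B := by
        refine List.countP_congr fun a _ => ?_
        simp only [Bool.or_eq_true, decide_eq_true_eq, cnt]
        omega
      have e3' : List.countP (fun a => decide (a = 0) || decide (a = 1)) B = cnt 1 B := by
        refine List.countP_congr fun a _ => ?_
        simp only [Bool.or_eq_true, decide_eq_true_eq, cnt]
        omega
      rw [e1', e2', e3']
      have : (k + 1).choose 2 = k.choose 1 + k.choose 2 := Nat.choose_succ_succ' k 1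
      have : (k + 1) * cnt 0 B = k * cnt 0 B + cnt 0 B := by ring
      rw [Nat.choose_one_right] at *
      omega
    refine ⟨?_, hd⟩
    have hl : (List.replicate (k + 1) (0:ℤ) ++ B ++ [0] ++ List.replicate k 1).length
        = ([0, 1] ++ List.replicate k (2:ℤ) ++ B ++ List.replicate k (-1)).length := by
      simp; omega
    have ha : area ([0, 1] ++ List.replicate k (2:ℤ) ++ B ++ List.replicate k (-1))
        = area (List.replicate (k + 1) (0:ℤ) ++ B ++ [0] ++ List.replicate k 1) + 1 := by
      simp [area, List.sum_append, List.sum_replicate, smul_eq_mul]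
      push_cast
      ring
    unfold defc
    rw [hl, ha, hd]
    push_cast
    ring
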